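/- arXiv:1209.0340 — 2 statements merged into one kernel-verified Lean document; each statement's English description precedes it below -/
import Mathlib

section
/- Let a be a positive definite symmetric bilinear form on ℝⁿ and b a nonzero covector. For y with b·y > 0, the Hessian g of ½F² of the Kropina metric F(y) = a(y,y)/(b·y) is given by g_{ij} = (2α²/β²)a_{ij} + (3α⁴/β⁴)b_i b_j − (4α²/β³)(a_{0i}b_j + a_{0j}b_i) + (4/β²)a_{0i}a_{0j}, where α² = a(y,y), β = b·y, a_{0i} = a_{ij}y^j, and this matrix is positive definite. -/
open Matrix
noncomputable def dotCLM {n : ℕ} (c : Fin n → ℝ) : (Fin n → ℝ) →L[ℝ] ℝ :=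
  ∑ i, c i • (ContinuousLinearMap.proj i : (Fin n → ℝ) →L[ℝ] ℝ)

@[simp] lemma dotCLM_apply {n : ℕ} (c w : Fin n → ℝ) : dotCLM c w = c ⬝ᵥ w := by
  simp [dotCLM, dotProduct]

lemma hasFDerivAt_dot {n : ℕ} (c w : Fin n → ℝ) :
    HasFDerivAt (fun z : Fin n → ℝ => c ⬝ᵥ z) (dotCLM c) w := by
  have h : (fun z : Fin n → ℝ => c ⬝ᵥ z) = dotCLM c := by funext z; simp
  rw [h]; exact (dotCLM c).hasFDerivAt

lemma contDiff_dot {n : ℕ} (c : Fin n → ℝ) : ContDiff ℝ ⊤ (fun z : Fin n → ℝ => c ⬝ᵥ z) := by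
  have h : (fun z : Fin n → ℝ => c ⬝ᵥ z) = dotCLM c := by funext z; simp
  rw [h]; exact (dotCLM c).contDiff

lemma quad_eq_sum {n : ℕ} (a : Matrix (Fin n) (Fin n) ℝ) :
    (fun z : Fin n → ℝ => z ⬝ᵥ a *ᵥ z) = fun z => ∑ i, z i * (a i ⬝ᵥ z) := rfl

lemma contDiff_quad {n : ℕ} (a : Matrix (Fin n) (Fin n) ℝ) :
    ContDiff ℝ ⊤ (fun z : Fin n → ℝ => z ⬝ᵥ a *ᵥ z) := by
  rw [quad_eq_sum]
  apply ContDiff.sum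
  intro i _
  have h : ContDiff ℝ ⊤ (fun z : Fin n → ℝ => a i ⬝ᵥ z) := by
    have h2 : (fun z : Fin n → ℝ => a i ⬝ᵥ z) = dotCLM (a i) := by funext z; simp
    rw [h2]; exact (dotCLM (a i)).contDiff
  exact (ContinuousLinearMap.proj i : (Fin n → ℝ) →L[ℝ] ℝ).contDiff.mul h

lemma symm_dot {n : ℕ} {a : Matrix (Fin n) (Fin n) ℝ} (hsa : aᵀ = a) (z w : Fin n → ℝ) :
    (a *ᵥ z) ⬝ᵥ w = (a *ᵥ w) ⬝ᵥ z := by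
  rw [dotProduct_comm, dotProduct_mulVec, ← mulVec_transpose, hsa]

lemma hasFDerivAt_quad {n : ℕ} {a : Matrix (Fin n) (Fin n) ℝ} (hsa : aᵀ = a)
    (w : Fin n → ℝ) :
    HasFDerivAt (fun z : Fin n → ℝ => z ⬝ᵥ a *ᵥ z) (dotCLM ((2:ℝ) • (a *ᵥ w))) w := by
  have h : ∀ i ∈ Finset.univ, HasFDerivAt (fun z : Fin n → ℝ => z i * (a i ⬝ᵥ z))
      (w i • dotCLM (a i) + (a i ⬝ᵥ w) • (ContinuousLinearMap.proj i : (Fin n → ℝ) →L[ℝ] ℝ)) w :=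
    fun i _ => (ContinuousLinearMap.proj i :
        (Fin n → ℝ) →L[ℝ] ℝ).hasFDerivAt.mul (hasFDerivAt_dot (a i) w)
  have hs := HasFDerivAt.fun_sum h
  rw [quad_eq_sum]
  refine hs.congr_fderiv ?_
  symm
  ext u
  simp only [ContinuousLinearMap.sum_apply, ContinuousLinearMap.add_apply,
    ContinuousLinearMap.smul_apply, dotCLM_apply, ContinuousLinearMap.proj_apply,
    smul_eq_mul, smul_dotProduct]
  have h1 : ∑ i, (w i * (a i ⬝ᵥ u) + (a i ⬝ᵥ w) * u i)
      = w ⬝ᵥ (a *ᵥ u) + (a *ᵥ w) ⬝ᵥ u := by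
    rw [Finset.sum_add_distrib]; rfl
  rw [h1, dotProduct_mulVec, ← mulVec_transpose, hsa, two_mul]

lemma fderiv_f_eq {n : ℕ} {a : Matrix (Fin n) (Fin n) ℝ} (hsa : aᵀ = a)
    (b v w : Fin n → ℝ) (hw : b ⬝ᵥ w ≠ 0) :
    fderiv ℝ (fun z => (1/2 : ℝ) * ((z ⬝ᵥ a *ᵥ z) / (b ⬝ᵥ z))^2) w v =
      ((w ⬝ᵥ a *ᵥ w) * (b ⬝ᵥ w)⁻¹) * ((b ⬝ᵥ w)⁻¹ * (2 * ((a *ᵥ v) ⬝ᵥ w)) -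
        (w ⬝ᵥ a *ᵥ w) * ((b ⬝ᵥ w)⁻¹ * (b ⬝ᵥ w)⁻¹) * (b ⬝ᵥ v)) := by
  have hq := hasFDerivAt_quad hsa w
  have hl := hasFDerivAt_dot b w
  have hinv : HasFDerivAt (fun z : Fin n → ℝ => (b ⬝ᵥ z)⁻¹)
      ((ContinuousLinearMap.smulRight (1 : ℝ →L[ℝ] ℝ) (-((b ⬝ᵥ w) ^ 2)⁻¹)).comp (dotCLM b)) w :=
    (hasFDerivAt_inv hw).comp w hl
  have hqr := hq.mul hinv
  have hprod := hqr.mul hqr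
  have hf := hprod.const_mul (1/2 : ℝ)
  have hfe : (fun z => (1/2 : ℝ) * ((z ⬝ᵥ a *ᵥ z) / (b ⬝ᵥ z))^2)
      = fun z => (1/2 : ℝ) * ((z ⬝ᵥ a *ᵥ z) * (b ⬝ᵥ z)⁻¹ * ((z ⬝ᵥ a *ᵥ z) * (b ⬝ᵥ z)⁻¹)) := by
    funext z; rw [div_eq_mul_inv]; ring
  have hf' : HasFDerivAt (fun z => (1/2 : ℝ) * ((z ⬝ᵥ a *ᵥ z) * (b ⬝ᵥ z)⁻¹ * ((z ⬝ᵥ a *ᵥ z) * (b ⬝ᵥ z)⁻¹))) _ w := hf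
  rw [hfe, hf'.fderiv]
  simp only [ContinuousLinearMap.smul_apply, ContinuousLinearMap.add_apply,
    ContinuousLinearMap.comp_apply, ContinuousLinearMap.smulRight_apply,
    ContinuousLinearMap.one_apply, dotCLM_apply, smul_eq_mul, smul_dotProduct, Pi.mul_apply]
  rw [symm_dot hsa w v]
  field_simp
  ring

lemma quad_vecMulVec {n : ℕ} (c d x : Fin n → ℝ) :
    x ⬝ᵥ (vecMulVec c d *ᵥ x) = (c ⬝ᵥ x) * (d ⬝ᵥ x) := by
  simp only [Matrix.mulVec, Matrix.vecMulVec_apply, dotProduct, Finset.mul_sum,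
    Finset.sum_mul]
  rw [Finset.sum_comm]
  exact Finset.sum_congr rfl fun k _ => Finset.sum_congr rfl fun l _ => by ring

set_option maxHeartbeats 2000000 in
theorem kropina_fundamental_tensor (n : ℕ)
    (a : Matrix (Fin n) (Fin n) ℝ) (ha : a.PosDef)
    (b : Fin n → ℝ) (hb : b ≠ 0)
    (y : Fin n → ℝ) (hy : 0 < b ⬝ᵥ y) :
    let F : (Fin n → ℝ) → ℝ := fun w => (w ⬝ᵥ a.mulVec w) / (b ⬝ᵥ w)
    let α2 : ℝ := y ⬝ᵥ a.mulVec y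
    let β : ℝ := b ⬝ᵥ y
    let a0 : Fin n → ℝ := a.mulVec y
    let g : Matrix (Fin n) (Fin n) ℝ := Matrix.of fun i j =>
      (2 * α2 / β ^ 2) * a i j + (3 * α2 ^ 2 / β ^ 4) * b i * b j
        - (4 * α2 / β ^ 3) * (a0 i * b j + a0 j * b i)
        + (4 / β ^ 2) * (a0 i * a0 j)
    (∀ i j, g i j =
      iteratedFDeriv ℝ 2 (fun w => (1 / 2) * (F w) ^ 2) y
        ![Pi.single i 1, Pi.single j 1]) ∧
    g.PosDef := by
  intro F α2 β a0 g
  have hsa : aᵀ = a := by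
    have h := ha.1
    rwa [Matrix.IsHermitian, conjTranspose_eq_transpose_of_trivial] at h
  have hyne : b ⬝ᵥ y ≠ 0 := ne_of_gt hy
  have hα2 : (0:ℝ) < α2 := by
    have hy0 : y ≠ 0 := by
      rintro rfl; rw [dotProduct_zero] at hy; exact lt_irrefl 0 hy
    have := ha.dotProduct_mulVec_pos hy0
    simpa using this
  constructor
  · -- derivative formula
    intro i j
    show g i j = iteratedFDeriv ℝ 2
        (fun w => (1/2 : ℝ) * ((w ⬝ᵥ a *ᵥ w) / (b ⬝ᵥ w))^2) y
        ![Pi.single i 1, Pi.single j 1]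
    set u : Fin n → ℝ := Pi.single i 1 with hu
    set v : Fin n → ℝ := Pi.single j 1 with hv
    rw [iteratedFDeriv_two_apply]
    have hm0 : ![u, v] 0 = u := rfl
    have hm1 : ![u, v] 1 = v := rfl
    rw [hm0, hm1]
    -- contDiff
    have h1 : ContDiffAt ℝ 2 (fun w : Fin n → ℝ => w ⬝ᵥ a *ᵥ w) y :=
      (contDiff_quad a).contDiffAt.of_le le_top
    have h2 : ContDiffAt ℝ 2 (fun w : Fin n → ℝ => b ⬝ᵥ w) y :=
      (contDiff_dot b).contDiffAt.of_le le_top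
    have hcd : ContDiffAt ℝ 2
        (fun w => (1/2 : ℝ) * ((w ⬝ᵥ a *ᵥ w) / (b ⬝ᵥ w))^2) y :=
      contDiffAt_const.mul ((h1.div h2 hyne).pow 2)
    have hdG : DifferentiableAt ℝ
        (fderiv ℝ (fun w => (1/2 : ℝ) * ((w ⬝ᵥ a *ᵥ w) / (b ⬝ᵥ w))^2)) y :=
      (hcd.fderiv_right (m := 1) (by norm_num)).differentiableAt (by norm_num)
    -- step 1 : apply to v
    have step1 : fderiv ℝ
        (fderiv ℝ (fun w => (1/2 : ℝ) * ((w ⬝ᵥ a *ᵥ w) / (b ⬝ᵥ w))^2)) y u v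
        = fderiv ℝ
          (fun w => fderiv ℝ (fun w => (1/2 : ℝ) * ((w ⬝ᵥ a *ᵥ w) / (b ⬝ᵥ w))^2) w v) y u := by
      rw [fderiv_clm_apply hdG (differentiableAt_const v)]
      simp
    rw [step1]
    -- step 2 : eventual equality with H
    have hUo : IsOpen {w : Fin n → ℝ | 0 < b ⬝ᵥ w} :=
      isOpen_lt continuous_const (contDiff_dot b).continuous
    have hev : (fun w => fderiv ℝ (fun w => (1/2 : ℝ) * ((w ⬝ᵥ a *ᵥ w) / (b ⬝ᵥ w))^2) w v)
        =ᶠ[nhds y] (fun w =>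
          ((w ⬝ᵥ a *ᵥ w) * (b ⬝ᵥ w)⁻¹) * ((b ⬝ᵥ w)⁻¹ * (2 * ((a *ᵥ v) ⬝ᵥ w)) -
            (w ⬝ᵥ a *ᵥ w) * ((b ⬝ᵥ w)⁻¹ * (b ⬝ᵥ w)⁻¹) * (b ⬝ᵥ v))) := by
      filter_upwards [hUo.mem_nhds hy] with w hw
      exact fderiv_f_eq hsa b v w (ne_of_gt hw)
    rw [hev.fderiv_eq]
    -- step 3 : differentiate H
    have hq := hasFDerivAt_quad hsa y
    have hl := hasFDerivAt_dot b y
    have hA := hasFDerivAt_dot (a *ᵥ v) y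
    have hinv : HasFDerivAt (fun z : Fin n → ℝ => (b ⬝ᵥ z)⁻¹)
        ((ContinuousLinearMap.smulRight (1 : ℝ →L[ℝ] ℝ) (-((b ⬝ᵥ y) ^ 2)⁻¹)).comp (dotCLM b)) y :=
      (hasFDerivAt_inv hyne).comp y hl
    have h1' := hq.mul hinv
    have h2' := hA.const_mul (2:ℝ)
    have h3' := hinv.mul h2'
    have h4' := hinv.mul hinv
    have h5' := hq.mul h4'
    have h6' := h5'.mul_const (b ⬝ᵥ v)
    have h7' := h3'.sub h6'
    have h8' := h1'.mul h7'
    have h8'' : HasFDerivAt (fun w => ((w ⬝ᵥ a *ᵥ w) * (b ⬝ᵥ w)⁻¹) * ((b ⬝ᵥ w)⁻¹ * (2 * ((a *ᵥ v) ⬝ᵥ w)) -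
          (w ⬝ᵥ a *ᵥ w) * ((b ⬝ᵥ w)⁻¹ * (b ⬝ᵥ w)⁻¹) * (b ⬝ᵥ v))) _ y := h8'
    rw [h8''.fderiv]
    simp only [ContinuousLinearMap.smul_apply, ContinuousLinearMap.add_apply,
      ContinuousLinearMap.sub_apply, ContinuousLinearMap.comp_apply,
      ContinuousLinearMap.smulRight_apply, ContinuousLinearMap.one_apply,
      dotCLM_apply, smul_eq_mul, smul_dotProduct, Pi.mul_apply, Pi.sub_apply]
    rw [symm_dot hsa v y]
    have e1 : b ⬝ᵥ u = b i := by rw [hu, dotProduct_single, mul_one]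
    have e2 : b ⬝ᵥ v = b j := by rw [hv, dotProduct_single, mul_one]
    have e3 : (a *ᵥ y) ⬝ᵥ u = a0 i := by rw [hu, dotProduct_single, mul_one]
    have e4 : (a *ᵥ y) ⬝ᵥ v = a0 j := by rw [hv, dotProduct_single, mul_one]
    have e5 : (a *ᵥ v) ⬝ᵥ u = a i j := by
      rw [hu, hv, mulVec_single, dotProduct_single]
      simp
    rw [e1, e2, e3, e4, e5]
    have hgij : g i j = (2 * α2 / β ^ 2) * a i j + (3 * α2 ^ 2 / β ^ 4) * b i * b j
        - (4 * α2 / β ^ 3) * (a0 i * b j + a0 j * b i)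
        + (4 / β ^ 2) * (a0 i * a0 j) := rfl
    have hα2d : α2 = y ⬝ᵥ a *ᵥ y := rfl
    have hβd : β = b ⬝ᵥ y := rfl
    rw [hgij, hα2d, hβd]
    field_simp
    ring
  · -- positive definiteness
    have hgij : ∀ i j, g i j = (2 * α2 / β ^ 2) * a i j + (3 * α2 ^ 2 / β ^ 4) * b i * b j
        - (4 * α2 / β ^ 3) * (a0 i * b j + a0 j * b i)
        + (4 / β ^ 2) * (a0 i * a0 j) := fun i j => rfl
    have hβ : (0:ℝ) < β := hy
    rw [Matrix.posDef_iff_dotProduct_mulVec]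
    constructor
    · rw [Matrix.IsHermitian, conjTranspose_eq_transpose_of_trivial]
      ext i j
      rw [Matrix.transpose_apply, hgij, hgij]
      have hs : a j i = a i j := by
        have h := congrFun (congrFun hsa i) j
        rw [Matrix.transpose_apply] at h
        exact h
      rw [hs]; ring
    · intro x hx
      simp only [star_trivial]
      set Q : ℝ := x ⬝ᵥ a *ᵥ x with hQdef
      set s : ℝ := b ⬝ᵥ x with hsdef
      set p : ℝ := a0 ⬝ᵥ x with hpdef
      have hgm : g = (2*α2/β^2) • a + ((3*α2^2/β^4) • vecMulVec b b
          - (4*α2/β^3) • (vecMulVec a0 b + vecMulVec b a0) + (4/β^2) • vecMulVec a0 a0) := by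
        ext i j
        rw [hgij]
        simp only [Matrix.add_apply, Matrix.sub_apply, Matrix.smul_apply,
          Matrix.vecMulVec_apply, smul_eq_mul]
        ring
      have hval : x ⬝ᵥ g *ᵥ x = (2*α2/β^2)*Q + (3*α2^2/β^4)*(s*s)
          - (4*α2/β^3)*((p*s) + (s*p)) + (4/β^2)*(p*p) := by
        rw [hgm]
        simp only [Matrix.add_mulVec, Matrix.sub_mulVec, Matrix.smul_mulVec,
          dotProduct_add, dotProduct_sub, dotProduct_smul, smul_eq_mul,
          quad_vecMulVec]
        rw [← hQdef, ← hsdef, ← hpdef]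
        ring
      have haq : ∀ z : Fin n → ℝ, 0 ≤ z ⬝ᵥ a *ᵥ z := fun z => by
        rcases eq_or_ne z 0 with rfl|h
        · simp
        · exact le_of_lt (by simpa using ha.dotProduct_mulVec_pos h)
      have hxy : x ⬝ᵥ (a *ᵥ y) = p := by rw [hpdef, dotProduct_comm]
      have hyx : y ⬝ᵥ (a *ᵥ x) = p := by
        rw [dotProduct_comm, symm_dot hsa x y, ← hpdef]
      have hcs : p^2 ≤ α2 * Q := by
        have h0 := haq (α2 • x - p • y)
        have hexp : (α2 • x - p • y) ⬝ᵥ a *ᵥ (α2 • x - p • y)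
            = α2^2*Q - 2*α2*(p*p) + p^2*α2 := by
          simp only [Matrix.sub_mulVec, Matrix.mulVec_sub, Matrix.mulVec_smul,
            Matrix.smul_mulVec, dotProduct_sub, sub_dotProduct,
            dotProduct_smul, smul_dotProduct, smul_eq_mul]
          rw [hxy, hyx, ← hQdef]
          have hα2d : y ⬝ᵥ (a *ᵥ y) = α2 := rfl
          rw [hα2d]
          ring
        rw [hexp] at h0
        nlinarith [h0, hα2]
      have hQ : 0 < Q := by
        have := ha.dotProduct_mulVec_pos hx
        simpa using this
      have hkey : β^4 * (x ⬝ᵥ g *ᵥ x)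
          = (2*β*p - α2*s)^2 + 2*(α2*s - β*p)^2 + 2*β^2*(α2*Q - p^2) := by
        rw [hval]
        field_simp [hβ.ne']
        ring
      have hrhs : 0 < (2*β*p - α2*s)^2 + 2*(α2*s - β*p)^2 + 2*β^2*(α2*Q - p^2) := by
        rcases eq_or_lt_of_le hcs with heq|hlt
        · have hp : p ≠ 0 := by
            intro h0
            rw [h0] at heq
            nlinarith [hα2, hQ]
          have h2 : 0 < (2*β*p - α2*s)^2 + 2*(α2*s - β*p)^2 := by
            rcases eq_or_ne (α2*s - β*p) 0 with hz|hz
            · have hbp : β * p ≠ 0 := mul_ne_zero (ne_of_gt hβ) hp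
              have he : 2*β*p - α2*s = β*p := by linarith
              rw [he]
              nlinarith [sq_nonneg (α2*s - β*p), sq_pos_of_ne_zero hbp]
            · nlinarith [sq_nonneg (2*β*p - α2*s), sq_pos_of_ne_zero hz]
          nlinarith [heq, sq_nonneg β]
        · have h2 : 0 < 2*β^2*(α2*Q - p^2) :=
            mul_pos (by positivity) (by linarith)
          nlinarith [sq_nonneg (2*β*p - α2*s), sq_nonneg (α2*s - β*p)]
      nlinarith [hkey, hrhs, pow_pos hβ 4]
end

section
/- Let α₁, α₂ be Riemannian norms (α_i² positive definite quadratic forms in y) and β₁, β₂ nonzero linear forms on ℝⁿ. If α₂(y)²·β₁(y) = α₁(y)²·β₂(y) as polynomials in y, then there exists a positive constant f such that β₂ = f·β₁ and α₂² = f·α₁². -/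
open Matrix

lemma kropina_posdef_pos {n : ℕ} {a : Matrix (Fin n) (Fin n) ℝ} (ha : a.PosDef)
    {y : Fin n → ℝ} (hy : y ≠ 0) : 0 < y ⬝ᵥ a.mulVec y := by
  have := ha.re_dotProduct_pos hy
  simpa using this

lemma kropina_parallelogram {n : ℕ} (a : Matrix (Fin n) (Fin n) ℝ) (y z : Fin n → ℝ) :
    (y + z) ⬝ᵥ a.mulVec (y + z) + (y - z) ⬝ᵥ a.mulVec (y - z)
      = 2 * (y ⬝ᵥ a.mulVec y) + 2 * (z ⬝ᵥ a.mulVec z) := by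
  simp [Matrix.mulVec_add, Matrix.mulVec_sub, dotProduct_add, dotProduct_sub,
    add_dotProduct, sub_dotProduct]
  ring

theorem kropina_isometry_conformal_factor (n : ℕ)
    (a₁ a₂ : Matrix (Fin n) (Fin n) ℝ) (ha₁ : a₁.PosDef) (ha₂ : a₂.PosDef)
    (b₁ b₂ : (Fin n → ℝ) →ₗ[ℝ] ℝ) (hb₁ : b₁ ≠ 0) (hb₂ : b₂ ≠ 0)
    (heq : ∀ y : Fin n → ℝ,
      (y ⬝ᵥ a₂.mulVec y) * b₁ y = (y ⬝ᵥ a₁.mulVec y) * b₂ y) :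
    ∃ f : ℝ, 0 < f ∧ (∀ y, b₂ y = f * b₁ y) ∧
      ∀ y : Fin n → ℝ, y ⬝ᵥ a₂.mulVec y = f * (y ⬝ᵥ a₁.mulVec y) := by
  -- pick a vector where b₁ is nonzero
  obtain ⟨z₀, hz₀⟩ : ∃ z, b₁ z ≠ 0 := by
    by_contra h
    push_neg at h
    exact hb₁ (LinearMap.ext fun x => h x)
  have hz₀ne : z₀ ≠ 0 := by
    intro h
    apply hz₀
    simp [h]
  -- kernel inclusion
  have hker : ∀ w, b₁ w = 0 → b₂ w = 0 := by
    intro w hw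
    by_contra hw2
    have h := heq w
    rw [hw, mul_zero] at h
    have hQ1 : w ⬝ᵥ a₁.mulVec w = 0 := by
      rcases mul_eq_zero.mp h.symm with h' | h'
      · exact h'
      · exact absurd h' hw2
    have hwne : w ≠ 0 := by
      intro h0
      apply hw2
      simp [h0]
    exact absurd hQ1 (ne_of_gt (kropina_posdef_pos ha₁ hwne))
  set f : ℝ := b₂ z₀ / b₁ z₀ with hf
  -- linear claim
  have hlin : ∀ y, b₂ y = f * b₁ y := by
    intro y
    have hw : b₁ (y - (b₁ y / b₁ z₀) • z₀) = 0 := by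
      simp [map_sub, _root_.map_smul]
      field_simp
      ring
    have h2 := hker _ hw
    simp only [map_sub, _root_.map_smul, smul_eq_mul, sub_eq_zero] at h2
    rw [h2, hf]
    field_simp
  -- quadratic claim for b₁ y ≠ 0
  have hQne : ∀ y, b₁ y ≠ 0 → y ⬝ᵥ a₂.mulVec y = f * (y ⬝ᵥ a₁.mulVec y) := by
    intro y hy
    have h := heq y
    rw [hlin y] at h
    have : (y ⬝ᵥ a₂.mulVec y) * b₁ y = (f * (y ⬝ᵥ a₁.mulVec y)) * b₁ y := by
      rw [h]; ring
    exact mul_right_cancel₀ hy this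
  have hQz₀ := hQne z₀ hz₀
  -- positivity of f
  have hfpos : 0 < f := by
    have h1 := kropina_posdef_pos ha₁ hz₀ne
    have h2 := kropina_posdef_pos ha₂ hz₀ne
    nlinarith
  refine ⟨f, hfpos, hlin, fun y => ?_⟩
  by_cases hy : b₁ y = 0
  · have hp : b₁ (y + z₀) ≠ 0 := by simp [map_add, hy, hz₀]
    have hm : b₁ (y - z₀) ≠ 0 := by simp [map_sub, hy, hz₀]
    have e1 := hQne _ hp
    have e2 := hQne _ hm
    have p2 := kropina_parallelogram a₂ y z₀
    have p1 := kropina_parallelogram a₁ y z₀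
    nlinarith [p1, p2, e1, e2, hQz₀]
  · exact hQne y hy
end
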